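/- Let μ₁², …, μ_N² be N ≥ 2 distinct nonzero complex numbers with C_i = ∏_{j≠i} μ_j²/(μ_j² - μ_i²), and suppose each μ_i has positive real part. Then the function ρ(r) = (1/(4πr))·∑_{i=1}^N C_i·μ_i²·e^{-μ_i r} extends to an analytic function on [0,∞) whose Taylor coefficients of orders r¹, r³, …, r^{2N-5} (odd orders up to 2N-5) all vanish, while the coefficient of r^{2N-3} is nonzero. -/

import Mathlib

open Polynomial Finset

private lemma evalBasis {N : ℕ} (v : Fin N → ℂ) (hv : Function.Injective v) (i : Fin N) :
    Polynomial.eval 0 (Lagrange.basis Finset.univ v i)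
      = ∏ j ∈ Finset.univ.erase i, v j / (v j - v i) := by
  rw [Lagrange.basis, Polynomial.eval_prod]
  refine Finset.prod_congr rfl fun j hj => ?_
  have hne : v i ≠ v j := fun h => (Finset.mem_erase.1 hj).1 (hv h).symm
  rw [Lagrange.basisDivisor]
  simp only [Polynomial.eval_mul, Polynomial.eval_C, Polynomial.eval_sub, Polynomial.eval_X]
  have h1 : v i - v j ≠ 0 := sub_ne_zero.2 hne
  have h2 : v j - v i ≠ 0 := sub_ne_zero.2 hne.symm
  field_simp
  ring

private lemma evalInterp {N : ℕ} (v : Fin N → ℂ) (r : Fin N → ℂ) :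
    Polynomial.eval 0 (Lagrange.interpolate Finset.univ v r)
      = ∑ i, r i * Polynomial.eval 0 (Lagrange.basis Finset.univ v i) := by
  rw [Lagrange.interpolate_apply, Polynomial.eval_finset_sum]
  exact Finset.sum_congr rfl fun i _ => by rw [Polynomial.eval_mul, Polynomial.eval_C]

private lemma momentLow {N : ℕ} (v : Fin N → ℂ) (hv : Function.Injective v)
    {n : ℕ} (hn1 : 1 ≤ n) (hnN : n < N) :
    ∑ i, Polynomial.eval 0 (Lagrange.basis Finset.univ v i) * v i ^ n = 0 := by
  have hinj : Set.InjOn v ↑(Finset.univ : Finset (Fin N)) := hv.injOn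
  have hdeg : (X ^ n : ℂ[X]).degree < (Finset.univ : Finset (Fin N)).card := by
    rw [Polynomial.degree_X_pow, Finset.card_univ, Fintype.card_fin]
    exact_mod_cast WithBot.coe_lt_coe.2 hnN
  have h := Lagrange.eq_interpolate_of_eval_eq hinj hdeg
    (r := fun i => v i ^ n) (fun i _ => by simp)
  have h2 := congrArg (Polynomial.eval 0) h
  rw [evalInterp] at h2
  simp only [Polynomial.eval_pow, Polynomial.eval_X,
    zero_pow (Nat.one_le_iff_ne_zero.1 hn1)] at h2
  rw [Finset.sum_congr rfl
    (fun i _ => mul_comm (Polynomial.eval 0 (Lagrange.basis Finset.univ v i)) (v i ^ n))]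
  exact h2.symm

private lemma momentTop {N : ℕ} (hN : 1 ≤ N) (v : Fin N → ℂ) (hv : Function.Injective v) :
    ∑ i, Polynomial.eval 0 (Lagrange.basis Finset.univ v i) * v i ^ N
      = -∏ i, (0 - v i) := by
  have hinj : Set.InjOn v ↑(Finset.univ : Finset (Fin N)) := hv.injOn
  have hcard : (Finset.univ : Finset (Fin N)).card = N := by simp
  set f : ℂ[X] := X ^ N - Lagrange.nodal Finset.univ v with hf
  have h1 : (X ^ N : ℂ[X]).degree = N := Polynomial.degree_X_pow N
  have h2 : (Lagrange.nodal Finset.univ v).degree = N := by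
    rw [Lagrange.degree_nodal, hcard]
  have hdeg : f.degree < (Finset.univ : Finset (Fin N)).card := by
    rw [hcard]
    have := Polynomial.degree_sub_lt (h1.trans h2.symm)
      (pow_ne_zero N Polynomial.X_ne_zero) (by
        rw [Polynomial.leadingCoeff_X_pow, (Lagrange.nodal_monic)])
    rw [h1] at this
    exact_mod_cast this
  have hev : ∀ i ∈ Finset.univ, Polynomial.eval (v i) f = v i ^ N := fun i hi => by
    simp [hf, Lagrange.eval_nodal_at_node hi]
  have h := Lagrange.eq_interpolate_of_eval_eq hinj hdeg (r := fun i => v i ^ N) hev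
  have h3 := congrArg (Polynomial.eval 0) h
  rw [evalInterp] at h3
  have h4 : Polynomial.eval 0 f = -∏ i, (0 - v i) := by
    simp [hf, Lagrange.eval_nodal, zero_pow (Nat.one_le_iff_ne_zero.1 hN)]
  rw [h4] at h3
  rw [Finset.sum_congr rfl
    (fun i _ => mul_comm (Polynomial.eval 0 (Lagrange.basis Finset.univ v i)) (v i ^ N))]
  exact h3.symm

private lemma expc (w : ℂ) : Complex.exp w = ∑' k : ℕ, w ^ k / (Nat.factorial k : ℂ) := by
  rw [Complex.exp_eq_exp_ℂ, NormedSpace.exp_eq_tsum_div]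

private lemma sumexp_summable (c w : ℂ) :
    Summable (fun k : ℕ => c * (w ^ k / (Nat.factorial k : ℂ))) :=
  (NormedSpace.expSeries_div_summable w).mul_left c

private lemma sum_value {N : ℕ} (C μ : Fin N → ℂ) (S : ℕ → ℂ)
    (hS : ∀ k, S k = ∑ i, C i * μ i ^ k)
    (hS2 : S 2 = 0) (z : ℂ) :
    ∑ i, C i * μ i ^ 2 * Complex.exp (-(μ i * z))
      = z * ∑' n : ℕ, (-1) ^ (n + 1) * S (n + 3) / (Nat.factorial (n+1) : ℂ) * z ^ n := by
  have hfun : (fun k : ℕ => (-1) ^ k * z ^ k / (Nat.factorial k : ℂ) * S (k + 2))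
      = fun k : ℕ => ∑ i, C i * μ i ^ 2 * ((-(μ i * z)) ^ k / (Nat.factorial k : ℂ)) := by
    funext k
    rw [hS, Finset.mul_sum]
    refine Finset.sum_congr rfl fun i _ => ?_
    have hnp : (-(μ i * z)) ^ k = (-1) ^ k * μ i ^ k * z ^ k := by
      rw [neg_eq_neg_one_mul, mul_pow, mul_pow]; ring
    rw [hnp, pow_add]
    ring
  have hsumm : Summable (fun k : ℕ => (-1) ^ k * z ^ k / (Nat.factorial k : ℂ) * S (k + 2)) := by
    rw [hfun]
    exact summable_sum fun i _ => sumexp_summable _ _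
  calc ∑ i, C i * μ i ^ 2 * Complex.exp (-(μ i * z))
      = ∑ i, ∑' k : ℕ, C i * μ i ^ 2 * ((-(μ i * z)) ^ k / (Nat.factorial k : ℂ)) := by
        refine Finset.sum_congr rfl fun i _ => ?_
        rw [expc, ← tsum_mul_left]
    _ = ∑' k : ℕ, ∑ i, C i * μ i ^ 2 * ((-(μ i * z)) ^ k / (Nat.factorial k : ℂ)) :=
        (Summable.tsum_finsetSum fun i _ => sumexp_summable _ _).symm
    _ = ∑' k : ℕ, (-1) ^ k * z ^ k / (Nat.factorial k : ℂ) * S (k + 2) := by rw [hfun]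
    _ = (-1) ^ (0:ℕ) * z ^ (0:ℕ) / (Nat.factorial 0 : ℂ) * S (0 + 2)
        + ∑' m : ℕ, (-1) ^ (m+1) * z ^ (m+1) / (Nat.factorial (m+1) : ℂ) * S ((m+1) + 2) :=
        Summable.tsum_eq_zero_add hsumm
    _ = ∑' m : ℕ, (-1) ^ (m+1) * z ^ (m+1) / (Nat.factorial (m+1) : ℂ) * S ((m+1) + 2) := by
        simp [hS2]
    _ = z * ∑' n : ℕ, (-1) ^ (n + 1) * S (n + 3) / (Nat.factorial (n+1) : ℂ) * z ^ n := by
        rw [← tsum_mul_left]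
        refine tsum_congr fun m => ?_
        rw [pow_succ]
        ring_nf

private lemma radiusTop (a : ℕ → ℂ) (K M : ℝ)
    (hbound : ∀ n, ‖a n‖ ≤ K * (M ^ n / Nat.factorial n)) :
    (FormalMultilinearSeries.ofScalars ℂ a).radius = ⊤ := by
  apply FormalMultilinearSeries.radius_eq_top_of_summable_norm
  intro r
  have hsum : Summable (fun n : ℕ => K * ((M * r) ^ n / Nat.factorial n)) :=
    (Real.summable_pow_div_factorial (M * r)).mul_left K
  refine Summable.of_nonneg_of_le (fun n => ?_) (fun n => ?_) hsum
  · positivity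
  · rw [FormalMultilinearSeries.ofScalars_norm]
    calc ‖a n‖ * (r : ℝ) ^ n ≤ K * (M ^ n / Nat.factorial n) * (r : ℝ) ^ n := by
          have h0 : (0:ℝ) ≤ (r:ℝ) ^ n := by positivity
          exact mul_le_mul_of_nonneg_right (hbound n) h0
      _ = K * ((M * r) ^ n / Nat.factorial n) := by rw [mul_pow]; ring

private lemma iterDeriv (a : ℕ → ℂ)
    (h : (FormalMultilinearSeries.ofScalars ℂ a).radius = ⊤) (n : ℕ) :
    iteratedDeriv n (FormalMultilinearSeries.ofScalars ℂ a).sum 0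
      = (Nat.factorial n : ℂ) * a n := by
  have hball := (FormalMultilinearSeries.ofScalars ℂ a).hasFPowerSeriesOnBall
    (by rw [h]; exact ENNReal.zero_lt_top)
  rw [iteratedDeriv_eq_iteratedFDeriv, ← hball.factorial_smul (1 : ℂ) n,
    FormalMultilinearSeries.ofScalars_apply_eq]
  simp [nsmul_eq_mul]

/-- The effective source `ρ(r) = (1/(4πr))·∑ C_i μ_i² e^{-μ_i r}` of polynomial
higher-derivative gravity with `N ≥ 2` distinct simple poles `μ_i²` (each `μ_i` with
positive real part) extends analytically to `r = 0`, with vanishing Taylor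
coefficients at the odd orders `1, 3, …, 2N-5` and a nonzero coefficient at order
`2N-3`; i.e. `ρ` is `(N-2)`-regular but not `(N-1)`-regular. -/
theorem stmt9 (N : ℕ) (hN : 2 ≤ N) (μ : Fin N → ℂ)
    (hinj : Function.Injective fun i => μ i ^ 2)
    (hne : ∀ i, μ i ≠ 0)
    (hre : ∀ i, 0 < (μ i).re)
    (C : Fin N → ℂ)
    (hC : ∀ i, C i = ∏ j ∈ Finset.univ.erase i, μ j ^ 2 / (μ j ^ 2 - μ i ^ 2)) :
    ∃ g : ℂ → ℂ, AnalyticAt ℂ g 0 ∧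
      (∀ r : ℝ, 0 < r →
        g r = 1 / (4 * (Real.pi : ℂ) * r) * ∑ i, C i * μ i ^ 2 * Complex.exp (-(μ i * r))) ∧
      (∀ m : ℕ, 2 * m + 1 ≤ 2 * N - 5 → iteratedDeriv (2 * m + 1) g 0 = 0) ∧
      iteratedDeriv (2 * N - 3) g 0 ≠ 0 := by
  classical
  have hπ : (Real.pi : ℂ) ≠ 0 := by exact_mod_cast Real.pi_ne_zero
  set v : Fin N → ℂ := fun i => μ i ^ 2 with hvdef
  have hvinj : Function.Injective v := hinj
  have hCval : ∀ i, C i = Polynomial.eval 0 (Lagrange.basis Finset.univ v i) := fun i => by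
    rw [hC i, evalBasis v hvinj i]
  set S : ℕ → ℂ := fun k => ∑ i, C i * μ i ^ k with hSdef
  have hSpow : ∀ n : ℕ,
      S (2 * n) = ∑ i, Polynomial.eval 0 (Lagrange.basis Finset.univ v i) * v i ^ n := by
    intro n
    refine Finset.sum_congr rfl fun i _ => ?_
    rw [← hCval i, pow_mul]
  have hSeven : ∀ n : ℕ, 1 ≤ n → n < N → S (2 * n) = 0 := fun n h1 h2 =>
    (hSpow n).trans (momentLow v hvinj h1 h2)
  have hS2 : S 2 = 0 := by
    have := hSeven 1 le_rfl (lt_of_lt_of_le one_lt_two hN)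
    simpa using this
  have hStop : S (2 * N) ≠ 0 := by
    rw [hSpow N, momentTop (le_trans one_le_two hN) v hvinj]
    simp only [zero_sub, neg_ne_zero]
    rw [Finset.prod_ne_zero_iff]
    intro i _
    simp only [neg_ne_zero]
    exact pow_ne_zero 2 (hne i)
  -- the power series
  set a : ℕ → ℂ := fun n =>
    (-1) ^ (n + 1) * S (n + 3) / (4 * (Real.pi : ℂ) * Nat.factorial (n + 1)) with hadef
  set B : ℝ := ∑ i, ‖C i‖ with hB
  set M : ℝ := 1 + ∑ i, ‖μ i‖ with hM
  have hM1 : (1:ℝ) ≤ M := by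
    rw [hM]
    have : (0:ℝ) ≤ ∑ i, ‖μ i‖ := Finset.sum_nonneg fun i _ => norm_nonneg _
    linarith
  have hM0 : (0:ℝ) ≤ M := le_trans zero_le_one hM1
  have hMι : ∀ i, ‖μ i‖ ≤ M := fun i => by
    rw [hM]
    have := Finset.single_le_sum (f := fun j => ‖μ j‖)
      (fun j _ => norm_nonneg _) (Finset.mem_univ i)
    linarith
  have hSb : ∀ k, ‖S k‖ ≤ B * M ^ k := fun k => by
    rw [hSdef]
    calc ‖∑ i, C i * μ i ^ k‖ ≤ ∑ i, ‖C i * μ i ^ k‖ := norm_sum_le _ _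
      _ ≤ ∑ i, ‖C i‖ * M ^ k := by
          refine Finset.sum_le_sum fun i _ => ?_
          rw [norm_mul, norm_pow]
          exact mul_le_mul_of_nonneg_left
            (pow_le_pow_left₀ (norm_nonneg _) (hMι i) k) (norm_nonneg _)
      _ = B * M ^ k := by rw [hB, Finset.sum_mul]
  have hB0 : (0:ℝ) ≤ B := Finset.sum_nonneg fun i _ => norm_nonneg _
  have habound : ∀ n, ‖a n‖ ≤ (B * M ^ 3 / (4 * Real.pi)) * (M ^ n / Nat.factorial n) := by
    intro n
    have hnorm : ‖a n‖ = ‖S (n + 3)‖ / (4 * Real.pi * Nat.factorial (n + 1)) := by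
      rw [hadef]
      simp only [norm_div, norm_mul, norm_pow, norm_neg, norm_one, one_pow, one_mul]
      congr 1
      simp [Complex.norm_real, abs_of_pos Real.pi_pos]
    rw [hnorm]
    have hfac : (Nat.factorial n : ℝ) ≤ (Nat.factorial (n + 1) : ℝ) := by
      exact_mod_cast Nat.factorial_le (Nat.le_succ n)
    have hfpos : (0:ℝ) < Nat.factorial n := by positivity
    have hfpos' : (0:ℝ) < Nat.factorial (n + 1) := by positivity
    have h4pi : (0:ℝ) < 4 * Real.pi := by positivity
    calc ‖S (n + 3)‖ / (4 * Real.pi * Nat.factorial (n + 1))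
        ≤ (B * M ^ (n + 3)) / (4 * Real.pi * Nat.factorial n) := by
          refine div_le_div₀ (mul_nonneg hB0 (pow_nonneg hM0 _)) (hSb (n + 3))
            (mul_pos h4pi hfpos) ?_
          exact mul_le_mul_of_nonneg_left hfac (le_of_lt h4pi)
      _ = (B * M ^ 3 / (4 * Real.pi)) * (M ^ n / Nat.factorial n) := by
          rw [pow_add]; ring
  have hrad : (FormalMultilinearSeries.ofScalars ℂ a).radius = ⊤ :=
    radiusTop a _ M habound
  have hball := (FormalMultilinearSeries.ofScalars ℂ a).hasFPowerSeriesOnBall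
    (by rw [hrad]; exact ENNReal.zero_lt_top)
  refine ⟨(FormalMultilinearSeries.ofScalars ℂ a).sum, hball.analyticAt, ?_, ?_, ?_⟩
  · -- value at r > 0
    intro r hr
    have hz : (r : ℂ) ≠ 0 := Complex.ofReal_ne_zero.mpr (ne_of_gt hr)
    have hval := sum_value C μ S (fun k => rfl) hS2 (r : ℂ)
    have hgsum : (FormalMultilinearSeries.ofScalars ℂ a).sum (r : ℂ)
        = ∑' n : ℕ, a n * (r : ℂ) ^ n := by
      have := FormalMultilinearSeries.ofScalars_sum_eq a (r : ℂ)
      simpa [FormalMultilinearSeries.ofScalarsSum, smul_eq_mul] using this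
    rw [hgsum, hval]
    have h4π : (4 * (Real.pi : ℂ)) ≠ 0 := by
      apply mul_ne_zero _ hπ; norm_num
    have hfactor : ∀ n : ℕ, a n * (r : ℂ) ^ n
        = (1 / (4 * (Real.pi : ℂ))) *
          ((-1) ^ (n + 1) * S (n + 3) / (Nat.factorial (n + 1) : ℂ) * (r : ℂ) ^ n) := by
      intro n
      rw [hadef]
      have hfne : (Nat.factorial (n+1) : ℂ) ≠ 0 := by
        exact_mod_cast Nat.cast_ne_zero.mpr (Nat.factorial_ne_zero (n+1))
      field_simp
    rw [tsum_congr hfactor, tsum_mul_left]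
    field_simp
  · -- vanishing odd derivatives
    intro m hm
    rw [iterDeriv a hrad]
    have h1 : 2 * m + 1 + 3 = 2 * (m + 2) := by omega
    have h2 : S (2 * (m + 2)) = 0 := hSeven (m + 2) (by omega) (by omega)
    rw [hadef]
    simp only [h1, h2, mul_zero, zero_mul, zero_div, mul_zero]
  · -- nonzero derivative at 2N-3
    rw [iterDeriv a hrad]
    have h1 : 2 * N - 3 + 3 = 2 * N := by omega
    rw [hadef]
    simp only [h1]
    apply mul_ne_zero
    · exact Nat.cast_ne_zero.mpr (Nat.factorial_ne_zero _)
    apply div_ne_zero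
    · exact mul_ne_zero (pow_ne_zero _ (neg_ne_zero.mpr one_ne_zero)) hStop
    · apply mul_ne_zero (mul_ne_zero (by norm_num) hπ)
      exact Nat.cast_ne_zero.mpr (Nat.factorial_ne_zero _)
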